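/- Let a ≥ 1, b ≥ 1, and I the edge ideal of K_a ∨ K̄_b. For every n ≥ 1, the number of minimal monomial generators of I^n equals Σ_{s=0}^{n} C(s + b - 1, b - 1) · [ C(2n - s + a - 1, a - 1) - a·C(n - s + a - 2, a - 1) ], with the convention that C(r, s) = 0 if r < 0 or r < s. -/

import Mathlib

open MvPolynomial

/-- `m` is a minimal generator of the monomial ideal `L`: it lies in `L` but
not in `𝔪·L`, where `𝔪` is the ideal generated by all the variables. -/
def isMinimalGenerator {sigma k : Type*} [Field k]
    (L : Ideal (MvPolynomial sigma k)) (m : MvPolynomial sigma k) : Prop :=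
  m ∈ L ∧
    m ∉ Ideal.span (Set.range (MvPolynomial.X : sigma → MvPolynomial sigma k)) * L

namespace Stmt16Aux

variable {a b : ℕ}

abbrev σt (a b : ℕ) := Fin a ⊕ Fin b

/-- exponent vectors of the generators of `I` -/
def G (a b : ℕ) : Set (σt a b →₀ ℕ) :=
  {ν | ∃ i j : Fin a, i < j ∧
      ν = Finsupp.single (Sum.inl i) 1 + Finsupp.single (Sum.inl j) 1} ∪
  {ν | ∃ (i : Fin a) (t : Fin b),
      ν = Finsupp.single (Sum.inl i) 1 + Finsupp.single (Sum.inr t) 1}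

/-- exponent vectors of generators of `I^m` (the `m`-fold sumset of `G`) -/
def S (a b : ℕ) : ℕ → Set (σt a b →₀ ℕ)
  | 0 => {0}
  | m + 1 => Set.image2 (· + ·) (G a b) (S a b m)

def deg (μ : σt a b →₀ ℕ) : ℕ := ∑ v, μ v
def degY (μ : σt a b →₀ ℕ) : ℕ := ∑ t, μ (Sum.inr t)

lemma deg_add (μ ν : σt a b →₀ ℕ) : deg (μ + ν) = deg μ + deg ν := by
  simp [deg, Finset.sum_add_distrib]

lemma degY_add (μ ν : σt a b →₀ ℕ) : degY (μ + ν) = degY μ + degY ν := by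
  simp [degY, Finset.sum_add_distrib]

lemma deg_eq (μ : σt a b →₀ ℕ) : deg μ = (∑ i, μ (Sum.inl i)) + degY μ := by
  simp [deg, degY, Fintype.sum_sum_type]

lemma deg_single (v : σt a b) : deg (Finsupp.single v 1) = 1 := by
  simp [deg, Finsupp.single_apply, Finset.sum_ite_eq]

lemma degY_single_inl (i : Fin a) :
    degY (Finsupp.single (Sum.inl i : σt a b) (1:ℕ)) = 0 := by
  simp [degY, Finsupp.single_apply]

lemma degY_single_inr (t : Fin b) :
    degY (Finsupp.single (Sum.inr t : σt a b) (1:ℕ)) = 1 := by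
  simp [degY, Finsupp.single_apply, Finset.sum_ite_eq]

lemma G_facts {g : σt a b →₀ ℕ} (hg : g ∈ G a b) :
    deg g = 2 ∧ degY g ≤ 1 ∧ ∀ i : Fin a, g (Sum.inl i) ≤ 1 := by
  rcases hg with ⟨i, j, hij, rfl⟩ | ⟨i, t, rfl⟩
  · refine ⟨by simp [deg_add, deg_single],
      by simp [degY_add, degY_single_inl], ?_⟩
    intro l
    simp only [Finsupp.add_apply, Finsupp.single_apply, Sum.inl.injEq]
    split_ifs <;> omega
  · refine ⟨by simp [deg_add, deg_single],
      by simp [degY_add, degY_single_inl, degY_single_inr], ?_⟩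
    intro l
    simp only [Finsupp.add_apply, Finsupp.single_apply]
    split_ifs <;> simp_all

lemma S_facts {m : ℕ} {μ : σt a b →₀ ℕ} (hμ : μ ∈ S a b m) :
    deg μ = 2 * m ∧ degY μ ≤ m ∧ ∀ i : Fin a, μ (Sum.inl i) ≤ m := by
  induction m generalizing μ with
  | zero => rcases hμ with rfl; simp [deg, degY]
  | succ m ih =>
    rcases hμ with ⟨g, hg, ν, hν, rfl⟩
    obtain ⟨h1, h2, h3⟩ := G_facts hg
    obtain ⟨h4, h5, h6⟩ := ih hν
    refine ⟨by rw [deg_add]; omega, by rw [degY_add]; omega, fun i => ?_⟩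
    have := h3 i; have := h6 i
    simp only [Finsupp.add_apply]; omega

/-- a pointwise-`≤` helper -/
lemma le_of_two_singles {u v : σt a b} (huv : u ≠ v) {μ : σt a b →₀ ℕ}
    (hu : 1 ≤ μ u) (hv : 1 ≤ μ v) :
    Finsupp.single u 1 + Finsupp.single v 1 ≤ μ := by
  rw [Finsupp.le_def]
  intro w
  simp only [Finsupp.add_apply, Finsupp.single_apply]
  rcases eq_or_ne u w with rfl | hA
  · rw [if_pos rfl, if_neg huv.symm]; omega
  · rw [if_neg hA]
    rcases eq_or_ne v w with rfl | hB
    · rw [if_pos rfl]; omega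
    · rw [if_neg hB]; omega

lemma mem_S_of_bounds {m : ℕ} {μ : σt a b →₀ ℕ}
    (hdeg : deg μ = 2 * m) (hy : degY μ ≤ m) (hx : ∀ i : Fin a, μ (Sum.inl i) ≤ m) :
    μ ∈ S a b m := by
  induction m generalizing μ with
  | zero =>
    have : ∀ v, μ v = 0 := by
      intro v
      refine Finset.sum_eq_zero_iff.mp ?_ v (Finset.mem_univ v)
      have h0 : deg μ = 0 := by omega
      exact h0
    have : μ = 0 := Finsupp.ext fun v => this v
    simp [S, this]
  | succ m ih =>
    have hsplit := deg_eq μ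
    -- degX is big
    have hdegX : (∑ i, μ (Sum.inl i)) = 2 * (m + 1) - degY μ := by omega
    have hxpos : ∃ i0 : Fin a, 0 < μ (Sum.inl i0) := by
      by_contra h
      push_neg at h
      have : (∑ i, μ (Sum.inl i)) = 0 := Finset.sum_eq_zero fun i _ => by
        have := h i; omega
      omega
    obtain ⟨i0, hi0⟩ := hxpos
    obtain ⟨i, -, hi⟩ := Finset.exists_max_image Finset.univ
      (fun i : Fin a => μ (Sum.inl i)) ⟨i0, Finset.mem_univ i0⟩
    simp only [Finset.mem_univ, forall_true_left] at hi
    have hii0 : 0 < μ (Sum.inl i) := lt_of_lt_of_le hi0 (hi i0)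
    rcases Nat.eq_zero_or_pos (degY μ) with hY0 | hYpos
    · -- no y part: use a pair of distinct x's
      have hX : (∑ j, μ (Sum.inl j)) = 2 * m + 2 := by omega
      have herase : μ (Sum.inl i) + ∑ j ∈ Finset.univ.erase i, μ (Sum.inl j)
          = ∑ j, μ (Sum.inl j) :=
        Finset.add_sum_erase Finset.univ (fun j => μ (Sum.inl j)) (Finset.mem_univ i)
      have hrest : 0 < ∑ j ∈ Finset.univ.erase i, μ (Sum.inl j) := by
        have := hx i; omega
      have : ∃ j0 ∈ Finset.univ.erase i, 0 < μ (Sum.inl j0) := by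
        by_contra h
        push_neg at h
        have : (∑ j ∈ Finset.univ.erase i, μ (Sum.inl j)) = 0 :=
          Finset.sum_eq_zero fun j hj => by have := h j hj; omega
        omega
      obtain ⟨j0, hj0mem, hj0⟩ := this
      obtain ⟨j, hjmem, hj⟩ := Finset.exists_max_image (Finset.univ.erase i)
        (fun j : Fin a => μ (Sum.inl j)) ⟨j0, hj0mem⟩
      have hjpos : 0 < μ (Sum.inl j) := lt_of_lt_of_le hj0 (hj j0 hj0mem)
      have hji : j ≠ i := Finset.ne_of_mem_erase hjmem
      set g : σt a b →₀ ℕ :=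
        Finsupp.single (Sum.inl i) 1 + Finsupp.single (Sum.inl j) 1 with hgdef
      have hgG : g ∈ G a b := by
        rcases lt_or_gt_of_ne hji.symm with h | h
        · exact Or.inl ⟨i, j, h, rfl⟩
        · exact Or.inl ⟨j, i, h, by rw [hgdef, add_comm]⟩
      have hgle : g ≤ μ :=
        le_of_two_singles (by simp [hji.symm, Sum.inl.injEq]) hii0 hjpos
      have hsum : g + (μ - g) = μ := add_tsub_cancel_of_le hgle
      have hgfacts := G_facts hgG
      refine Set.mem_image2.mpr ⟨g, hgG, μ - g, ih ?_ ?_ ?_, hsum⟩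
      · have := deg_add g (μ - g); rw [hsum] at this; omega
      · have := degY_add g (μ - g); rw [hsum] at this; omega
      · intro l
        have happ : g (Sum.inl l) + (μ - g) (Sum.inl l) = μ (Sum.inl l) := by
          rw [← Finsupp.add_apply, hsum]
        have hgi : g (Sum.inl i) = 1 := by
          rw [hgdef]
          simp only [Finsupp.add_apply, Finsupp.single_apply]
          simp [hji]
        have hgj : g (Sum.inl j) = 1 := by
          rw [hgdef]
          simp only [Finsupp.add_apply, Finsupp.single_apply]
          simp [hji.symm]
        rcases eq_or_ne l i with rfl | hli
        · have := hx l; omega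
        rcases eq_or_ne l j with rfl | hlj
        · have := hx l; omega
        -- l distinct from i, j : show μ (inl l) ≤ m
        have hsum3 : μ (Sum.inl l) + (μ (Sum.inl i) + μ (Sum.inl j))
            ≤ ∑ j', μ (Sum.inl j') := by
          have hsub : ({l, i, j} : Finset (Fin a)) ⊆ Finset.univ :=
            Finset.subset_univ _
          calc μ (Sum.inl l) + (μ (Sum.inl i) + μ (Sum.inl j))
              = ∑ w ∈ ({l, i, j} : Finset (Fin a)), μ (Sum.inl w) := by
                rw [Finset.sum_insert (by simp [hli, hlj]),
                  Finset.sum_pair (f := fun w => μ (Sum.inl w)) hji.symm]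
            _ ≤ _ := Finset.sum_le_sum_of_subset hsub
        have hgl : g (Sum.inl l) = 0 := by
          simp [hgdef, Finsupp.single_apply, Sum.inl.injEq,
            (show i ≠ l from fun h => hli h.symm),
            (show j ≠ l from fun h => hlj h.symm)]
        -- if μ (inl l) = m+1 then also i and j coords = m+1, contradiction
        have hmax_i : μ (Sum.inl l) ≤ μ (Sum.inl i) := hi l
        have hmax_j : μ (Sum.inl l) ≤ μ (Sum.inl j) :=
          hj l (Finset.mem_erase.mpr ⟨hli, Finset.mem_univ l⟩)
        omega
    · -- some y: use a mixed generator
      have hypos : ∃ t0 : Fin b, 0 < μ (Sum.inr t0) := by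
        by_contra h
        push_neg at h
        have : degY μ = 0 := Finset.sum_eq_zero fun t _ => by have := h t; omega
        omega
      obtain ⟨t, ht⟩ := hypos
      set g : σt a b →₀ ℕ :=
        Finsupp.single (Sum.inl i) 1 + Finsupp.single (Sum.inr t) 1 with hgdef
      have hgG : g ∈ G a b := Or.inr ⟨i, t, rfl⟩
      have hgle : g ≤ μ := le_of_two_singles (by simp) hii0 ht
      have hsum : g + (μ - g) = μ := add_tsub_cancel_of_le hgle
      refine Set.mem_image2.mpr ⟨g, hgG, μ - g, ih ?_ ?_ ?_, hsum⟩
      · have := deg_add g (μ - g); rw [hsum] at this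
        have := (G_facts hgG).1; omega
      · have := degY_add g (μ - g); rw [hsum] at this
        have : degY g = 1 := by
          rw [hgdef, degY_add, degY_single_inl, degY_single_inr]
        omega
      · intro l
        have happ : g (Sum.inl l) + (μ - g) (Sum.inl l) = μ (Sum.inl l) := by
          rw [← Finsupp.add_apply, hsum]
        have hgl : g (Sum.inl l) = if i = l then 1 else 0 := by
          simp [hgdef, Finsupp.single_apply]
        rcases eq_or_ne l i with rfl | hli
        · have := hx l; simp at hgl; omega
        -- l ≠ i: show μ (inl l) ≤ m
        have hmax : μ (Sum.inl l) ≤ μ (Sum.inl i) := hi l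
        have hpair : μ (Sum.inl l) + μ (Sum.inl i) ≤ ∑ j', μ (Sum.inl j') := by
          calc μ (Sum.inl l) + μ (Sum.inl i)
              = ∑ w ∈ ({l, i} : Finset (Fin a)), μ (Sum.inl w) :=
                (Finset.sum_pair (f := fun w => μ (Sum.inl w)) hli).symm
            _ ≤ _ := Finset.sum_le_sum_of_subset (Finset.subset_univ _)
        have : i ≠ l := fun h => hli h.symm
        simp [this] at hgl
        omega

section Ideals

variable {k : Type*} [Field k]

lemma X_mul_X_eq (u v : σt a b) :
    (X u * X v : MvPolynomial (σt a b) k)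
      = monomial (Finsupp.single u 1 + Finsupp.single v 1) 1 := by
  show monomial (Finsupp.single u 1) (1:k) * monomial (Finsupp.single v 1) 1 = _
  rw [monomial_mul, one_mul]

lemma span_image_mul (A B : Set (σt a b →₀ ℕ)) :
    Ideal.span ((fun ν => monomial ν (1:k)) '' A) *
      Ideal.span ((fun ν => monomial ν (1:k)) '' B)
      = Ideal.span ((fun ν => monomial ν (1:k)) '' Set.image2 (· + ·) A B) := by
  rw [Ideal.span_mul_span', ← Set.image2_mul, Set.image2_image_left, Set.image2_image_right,
    Set.image_image2]
  simp only [monomial_mul, one_mul]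

lemma pow_span (m : ℕ) :
    (Ideal.span ((fun ν => monomial ν (1:k)) '' G a b)) ^ m
      = Ideal.span ((fun ν => monomial ν (1:k)) '' S a b m) := by
  induction m with
  | zero =>
    simp only [pow_zero, S, Set.image_singleton]
    rw [Ideal.one_eq_top, monomial_zero', MvPolynomial.C_1, Ideal.span_singleton_one]
  | succ m ih =>
    rw [pow_succ', ih, span_image_mul]
    rfl

lemma gens_eq :
    ({p | ∃ i j : Fin a, i < j ∧ p = X (Sum.inl i) * X (Sum.inl j)} ∪
     {p | ∃ (i : Fin a) (t : Fin b), p = X (Sum.inl i) * X (Sum.inr t)} :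
       Set (MvPolynomial (σt a b) k))
    = (fun ν => monomial ν (1:k)) '' G a b := by
  rw [G, Set.image_union]
  congr 1
  · ext p
    simp only [Set.mem_setOf_eq, Set.mem_image]
    constructor
    · rintro ⟨i, j, hij, rfl⟩
      exact ⟨_, ⟨i, j, hij, rfl⟩, (X_mul_X_eq _ _).symm⟩
    · rintro ⟨ν, ⟨i, j, hij, rfl⟩, rfl⟩
      exact ⟨i, j, hij, (X_mul_X_eq _ _).symm⟩
  · ext p
    simp only [Set.mem_setOf_eq, Set.mem_image]
    constructor
    · rintro ⟨i, t, rfl⟩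
      exact ⟨_, ⟨i, t, rfl⟩, (X_mul_X_eq _ _).symm⟩
    · rintro ⟨ν, ⟨i, t, rfl⟩, rfl⟩
      exact ⟨i, t, (X_mul_X_eq _ _).symm⟩

lemma monomial_mem_iff {A : Set (σt a b →₀ ℕ)} {μ : σt a b →₀ ℕ} :
    monomial μ (1:k) ∈ Ideal.span ((fun ν => monomial ν (1:k)) '' A)
      ↔ ∃ ν ∈ A, ν ≤ μ := by
  rw [mem_ideal_span_monomial_image]
  simp [support_monomial]

lemma range_X_eq :
    Set.range (X : σt a b → MvPolynomial (σt a b) k)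
      = (fun ν => monomial ν (1:k)) ''
          Set.range (fun v : σt a b => Finsupp.single v 1) := by
  rw [← Set.range_comp]
  rfl

lemma key (n : ℕ)
    (I : Ideal (MvPolynomial (σt a b) k))
    (hI : I = Ideal.span
      ({p | ∃ i j : Fin a, i < j ∧ p = X (Sum.inl i) * X (Sum.inl j)} ∪
       {p | ∃ (i : Fin a) (t : Fin b), p = X (Sum.inl i) * X (Sum.inr t)})) :
    {μ : σt a b →₀ ℕ | isMinimalGenerator (I ^ n) (monomial μ (1 : k))}
      = S a b n := by
  subst hI
  rw [gens_eq]
  ext μ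
  simp only [Set.mem_setOf_eq]
  unfold isMinimalGenerator
  rw [pow_span, monomial_mem_iff, range_X_eq, span_image_mul, monomial_mem_iff]
  constructor
  · rintro ⟨⟨ν, hν, hle⟩, hnot⟩
    rcases eq_or_ne ν μ with rfl | hne
    · exact hν
    exfalso
    apply hnot
    have hlt : ∃ v, ν v < μ v := by
      by_contra h
      push_neg at h
      exact hne (le_antisymm hle (Finsupp.le_def.mpr h))
    obtain ⟨v, hv⟩ := hlt
    refine ⟨Finsupp.single v 1 + ν,
      Set.mem_image2.mpr ⟨_, ⟨v, rfl⟩, ν, hν, rfl⟩, ?_⟩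
    rw [Finsupp.le_def]
    intro w
    simp only [Finsupp.add_apply, Finsupp.single_apply]
    rcases eq_or_ne v w with rfl | h
    · rw [if_pos rfl]; omega
    · rw [if_neg h]
      have := Finsupp.le_def.mp hle w
      omega
  · intro hμ
    refine ⟨⟨μ, hμ, le_refl μ⟩, ?_⟩
    rintro ⟨ρ, hρ, hle⟩
    rcases Set.mem_image2.mp hρ with ⟨e, ⟨v, rfl⟩, ν, hν, rfl⟩
    have h1 : deg (Finsupp.single v 1 + ν) = 1 + 2 * n := by
      rw [deg_add, deg_single, (S_facts hν).1]
    have h2 : deg (Finsupp.single v 1 + ν) ≤ deg μ :=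
      Finset.sum_le_sum fun w _ => Finsupp.le_def.mp hle w
    have h3 : deg μ = 2 * n := (S_facts hμ).1
    omega

end Ideals

section Counting

lemma card_antidiag (c d : ℕ) :
    ((Finset.univ : Finset (Fin c)).finsuppAntidiag d).card = (d + c - 1).choose d := by
  classical
  rw [← Fintype.card_coe]
  have e1 : {μ : Fin c →₀ ℕ // μ ∈ (Finset.univ : Finset (Fin c)).finsuppAntidiag d}
      ≃ Sym (Fin c) d :=
    ((Finsupp.equivFunOnFinite).subtypeEquiv (fun μ => by
      simp [Finset.mem_finsuppAntidiag])).trans (Sym.equivNatSumOfFintype (Fin c) d).symm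
  rw [Fintype.card_congr e1, Sym.card_sym_eq_choose]
  congr 1
  simp [Nat.add_comm]

lemma card_antidiag' (c d : ℕ) (hc : 1 ≤ c) :
    ((Finset.univ : Finset (Fin c)).finsuppAntidiag d).card = (d + c - 1).choose (c - 1) := by
  rw [card_antidiag]
  have h1 : d ≤ d + c - 1 := by omega
  have h2 : d + c - 1 - d = c - 1 := by omega
  rw [← Nat.choose_symm h1, h2]

lemma sum_single_eq (c B : ℕ) (i : Fin c) :
    (∑ w, (Finsupp.single i B : Fin c →₀ ℕ) w) = B := by
  simp [Finsupp.single_apply, Finset.sum_ite_eq]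

lemma card_bad (c d B : ℕ) (i : Fin c) (hBd : B ≤ d) :
    (((Finset.univ : Finset (Fin c)).finsuppAntidiag d).filter
        (fun α => B ≤ α i)).card
      = ((Finset.univ : Finset (Fin c)).finsuppAntidiag (d - B)).card := by
  classical
  apply Finset.card_nbij' (fun α => α - Finsupp.single i B)
    (fun β => β + Finsupp.single i B)
  · intro α hα
    rw [Finset.mem_coe, Finset.mem_filter, Finset.mem_finsuppAntidiag] at hα
    obtain ⟨⟨h1, -⟩, h2⟩ := hα
    rw [Finset.mem_coe, Finset.mem_finsuppAntidiag]
    refine ⟨?_, Finset.subset_univ _⟩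
    show (∑ w, (α - Finsupp.single i B) w) = d - B
    have h1' : (∑ w, α w) = d := h1
    have hle : (Finsupp.single i B : Fin c →₀ ℕ) ≤ α := by
      rw [Finsupp.le_def]
      intro w
      rcases eq_or_ne i w with rfl | h
      · simpa using h2
      · simp [Finsupp.single_apply, h]
    have hsum : (Finsupp.single i B : Fin c →₀ ℕ) + (α - Finsupp.single i B) = α :=
      add_tsub_cancel_of_le hle
    have : (∑ w, ((Finsupp.single i B : Fin c →₀ ℕ) + (α - Finsupp.single i B)) w)
        = ∑ w, α w := by rw [hsum]
    simp only [Finsupp.add_apply, Finset.sum_add_distrib, sum_single_eq] at this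
    omega
  · intro β hβ
    rw [Finset.mem_coe, Finset.mem_finsuppAntidiag] at hβ
    obtain ⟨h1, -⟩ := hβ
    rw [Finset.mem_coe, Finset.mem_filter, Finset.mem_finsuppAntidiag]
    refine ⟨⟨?_, Finset.subset_univ _⟩, by simp⟩
    show (∑ w, (β + (Finsupp.single i B : Fin c →₀ ℕ)) w) = d
    have h1' : (∑ w, β w) = d - B := h1
    have hsum : (∑ w, (β + (Finsupp.single i B : Fin c →₀ ℕ)) w)
        = (∑ w, β w) + ∑ w, (Finsupp.single i B : Fin c →₀ ℕ) w := by
      simp [Finsupp.add_apply, Finset.sum_add_distrib]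
    rw [hsum, sum_single_eq, h1']
    omega
  · intro α hα
    rw [Finset.mem_coe, Finset.mem_filter] at hα
    have hle : (Finsupp.single i B : Fin c →₀ ℕ) ≤ α := by
      rw [Finsupp.le_def]
      intro w
      rcases eq_or_ne i w with rfl | h
      · simpa using hα.2
      · simp [Finsupp.single_apply, h]
    exact tsub_add_cancel_of_le hle
  · intro β hβ
    exact add_tsub_cancel_right β _

lemma card_bounded (a n s : ℕ) (ha : 1 ≤ a) (hn : 1 ≤ n) (hs : s ≤ n) :
    (((Finset.univ : Finset (Fin a)).finsuppAntidiag (2 * n - s)).filter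
        (fun α => ∀ i, α i ≤ n)).card
      = (2 * n - s + a - 1).choose (a - 1)
          - a * (if 2 ≤ n - s + a then (n - s + a - 2).choose (a - 1) else 0) := by
  classical
  set d := 2 * n - s with hd
  have htot := card_antidiag' a d ha
  have hsplit := Finset.card_filter_add_card_filter_not
    (s := (Finset.univ : Finset (Fin a)).finsuppAntidiag d)
    (p := fun α => ∀ i, α i ≤ n)
  have hbadeq : ((Finset.univ : Finset (Fin a)).finsuppAntidiag d).filter
        (fun α => ¬ ∀ i, α i ≤ n)
      = Finset.univ.biUnion (fun i : Fin a =>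
          ((Finset.univ : Finset (Fin a)).finsuppAntidiag d).filter
            (fun α => n + 1 ≤ α i)) := by
    ext α
    simp only [Finset.mem_filter, Finset.mem_biUnion, Finset.mem_univ, true_and]
    constructor
    · rintro ⟨h1, h2⟩
      push_neg at h2
      obtain ⟨i, hi⟩ := h2
      exact ⟨i, h1, by omega⟩
    · rintro ⟨i, h1, h2⟩
      refine ⟨h1, ?_⟩
      push_neg
      exact ⟨i, by omega⟩
  have hcoordle : ∀ (α : Fin a →₀ ℕ),
      α ∈ (Finset.univ : Finset (Fin a)).finsuppAntidiag d → ∀ i : Fin a, α i ≤ d := by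
    intro α hα i
    rw [Finset.mem_finsuppAntidiag] at hα
    rw [← hα.1]
    exact Finset.single_le_sum (fun w _ => Nat.zero_le _) (Finset.mem_univ i)
  have hdisj : ∀ i ∈ (Finset.univ : Finset (Fin a)), ∀ j ∈ (Finset.univ : Finset (Fin a)),
      i ≠ j → Disjoint
        (((Finset.univ : Finset (Fin a)).finsuppAntidiag d).filter (fun α => n + 1 ≤ α i))
        (((Finset.univ : Finset (Fin a)).finsuppAntidiag d).filter (fun α => n + 1 ≤ α j)) := by
    intro i _ j _ hij
    rw [Finset.disjoint_left]
    intro α hαi hαj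
    rw [Finset.mem_filter] at hαi hαj
    have hpair : α i + α j ≤ ∑ w, α w := by
      calc α i + α j = ∑ w ∈ ({i, j} : Finset (Fin a)), α w :=
            (Finset.sum_pair hij).symm
        _ ≤ _ := Finset.sum_le_sum_of_subset (Finset.subset_univ _)
    have hsum : (∑ w, α w) = d := by
      have := (Finset.mem_finsuppAntidiag.mp hαi.1).1
      exact this
    have hdle : d ≤ 2 * n := by omega
    omega
  have hbadcard := Finset.card_biUnion hdisj
  rcases Nat.lt_or_ge d (n + 1) with hcase | hcase
  · -- d ≤ n : no coordinate can exceed n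
    have hpieces : ∀ i : Fin a,
        (((Finset.univ : Finset (Fin a)).finsuppAntidiag d).filter
          (fun α => n + 1 ≤ α i)) = ∅ := by
      intro i
      rw [Finset.eq_empty_iff_forall_notMem]
      intro α hα
      rw [Finset.mem_filter] at hα
      have := hcoordle α hα.1 i
      omega
    have hbad0 : (((Finset.univ : Finset (Fin a)).finsuppAntidiag d).filter
        (fun α => ¬ ∀ i, α i ≤ n)).card = 0 := by
      rw [hbadeq, hbadcard]
      simp only [hpieces]
      simp [hpieces]
    have hsn : s = n := by omega
    have hifval : (if 2 ≤ n - s + a then (n - s + a - 2).choose (a - 1) else 0) = 0 := by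
      subst hsn
      simp only [Nat.sub_self, Nat.zero_add]
      rcases Nat.lt_or_ge a 2 with h2 | h2
      · rw [if_neg (by omega)]
      · rw [if_pos h2]
        exact Nat.choose_eq_zero_of_lt (by omega)
    rw [hifval]
    omega
  · -- n + 1 ≤ d
    have hpieces : ∀ i : Fin a,
        ((((Finset.univ : Finset (Fin a)).finsuppAntidiag d).filter
          (fun α => n + 1 ≤ α i))).card
        = (n - s + a - 2).choose (a - 1) := by
      intro i
      rw [card_bad a d (n + 1) i hcase, card_antidiag' a (d - (n + 1)) ha]
      congr 1
      omega
    have hbadval : (((Finset.univ : Finset (Fin a)).finsuppAntidiag d).filter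
        (fun α => ¬ ∀ i, α i ≤ n)).card = a * (n - s + a - 2).choose (a - 1) := by
      rw [hbadeq, hbadcard]
      simp only [hpieces]
      simp [hpieces, Finset.sum_const, Finset.card_univ, Nat.mul_comm]
    have hif : (if 2 ≤ n - s + a then (n - s + a - 2).choose (a - 1) else 0)
        = (n - s + a - 2).choose (a - 1) := by
      rw [if_pos (by omega)]
    rw [hif]
    omega

end Counting

lemma Tfin_card (a b n : ℕ) (ha : 1 ≤ a) (hb : 1 ≤ b) (hn : 1 ≤ n) :
    (((Finset.univ : Finset (σt a b)).finsuppAntidiag (2 * n)).filter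
        (fun μ => degY μ ≤ n ∧ ∀ i : Fin a, μ (Sum.inl i) ≤ n)).card
    = ∑ s ∈ Finset.range (n + 1),
        Nat.choose (s + b - 1) (b - 1) *
          (Nat.choose (2 * n - s + a - 1) (a - 1) -
            a * (if 2 ≤ n - s + a then Nat.choose (n - s + a - 2) (a - 1)
                 else 0)) := by
  classical
  set T := ((Finset.univ : Finset (σt a b)).finsuppAntidiag (2 * n)).filter
      (fun μ => degY μ ≤ n ∧ ∀ i : Fin a, μ (Sum.inl i) ≤ n) with hT
  rw [Finset.card_eq_sum_card_fiberwise
    (f := fun μ => degY μ) (t := Finset.range (n + 1))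
    (fun μ hμ => by
      rw [hT, Finset.mem_coe, Finset.mem_filter] at hμ
      exact Finset.mem_range_succ_iff.mpr hμ.2.1)]
  refine Finset.sum_congr rfl fun s hs => ?_
  have hs' : s ≤ n := Finset.mem_range_succ_iff.mp hs
  have hcard : (T.filter fun μ => degY μ = s).card
      = ((((Finset.univ : Finset (Fin a)).finsuppAntidiag (2 * n - s)).filter
            (fun α => ∀ i, α i ≤ n)) ×ˢ
          ((Finset.univ : Finset (Fin b)).finsuppAntidiag s)).card := by
    apply Finset.card_equiv Finsupp.sumFinsuppEquivProdFinsupp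
    intro μ
    rw [hT, Finset.mem_filter, Finset.mem_filter, Finset.mem_product,
      Finset.mem_filter, Finset.mem_finsuppAntidiag, Finset.mem_finsuppAntidiag,
      Finset.mem_finsuppAntidiag]
    constructor
    · rintro ⟨⟨⟨h1, -⟩, h2, h3⟩, h4⟩
      have hdeg : deg μ = 2 * n := h1
      have hsplit := deg_eq μ
      refine ⟨⟨⟨?_, Finset.subset_univ _⟩, fun i => ?_⟩, ?_, Finset.subset_univ _⟩
      · have : (∑ i, (Finsupp.sumFinsuppEquivProdFinsupp μ).1 i)
            = ∑ i, μ (Sum.inl i) :=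
          Finset.sum_congr rfl fun i _ => Finsupp.fst_sumFinsuppEquivProdFinsupp μ i
        rw [this]
        omega
      · rw [Finsupp.fst_sumFinsuppEquivProdFinsupp μ i]
        exact h3 i
      · have : (∑ t, (Finsupp.sumFinsuppEquivProdFinsupp μ).2 t)
            = ∑ t, μ (Sum.inr t) :=
          Finset.sum_congr rfl fun t _ => Finsupp.snd_sumFinsuppEquivProdFinsupp μ t
        rw [this]
        exact h4
    · rintro ⟨⟨⟨h1, -⟩, h3⟩, h2, -⟩
      have hX : (∑ i, μ (Sum.inl i)) = 2 * n - s := by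
        rw [← h1]
        exact Finset.sum_congr rfl fun i _ =>
          (Finsupp.fst_sumFinsuppEquivProdFinsupp μ i).symm
      have hY : degY μ = s := by
        rw [degY, ← h2]
        exact Finset.sum_congr rfl fun t _ =>
          (Finsupp.snd_sumFinsuppEquivProdFinsupp μ t).symm
      have hdeg : deg μ = (∑ i, μ (Sum.inl i)) + degY μ := deg_eq μ
      refine ⟨⟨⟨?_, Finset.subset_univ _⟩, ?_, fun i => ?_⟩, hY⟩
      · show deg μ = 2 * n
        omega
      · omega
      · have := h3 i
        rwa [Finsupp.fst_sumFinsuppEquivProdFinsupp μ i] at this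
  rw [hcard, Finset.card_product, card_antidiag' b s hb,
    card_bounded a n s ha hn hs', Nat.mul_comm]

end Stmt16Aux

/-- Counting formula:
`μ(I^n) = Σ_{s=0}^{n} C(s+b-1,b-1)·[C(2n-s+a-1,a-1) - a·C(n-s+a-2,a-1)]`,
with the convention that `C(r, s) = 0` when `r < 0` (the inner `if` handles
the case where `n - s + a - 2` would be negative as an integer). -/
theorem stmt_16 (k : Type*) [Field k] (a b n : ℕ) (ha : 1 ≤ a) (hb : 1 ≤ b)
    (hn : 1 ≤ n)
    (I : Ideal (MvPolynomial (Fin a ⊕ Fin b) k))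
    (hI : I = Ideal.span
      ({p | ∃ i j : Fin a, i < j ∧ p = X (Sum.inl i) * X (Sum.inl j)} ∪
       {p | ∃ (i : Fin a) (t : Fin b), p = X (Sum.inl i) * X (Sum.inr t)})) :
    {μ : (Fin a ⊕ Fin b) →₀ ℕ |
        isMinimalGenerator (I ^ n) (monomial μ (1 : k))}.ncard =
      ∑ s ∈ Finset.range (n + 1),
        Nat.choose (s + b - 1) (b - 1) *
          (Nat.choose (2 * n - s + a - 1) (a - 1) -
            a * (if 2 ≤ n - s + a then Nat.choose (n - s + a - 2) (a - 1)
                 else 0)) := by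
  classical
  have hkey := Stmt16Aux.key (k := k) (a := a) (b := b) n I hI
  rw [hkey]
  have hset : Stmt16Aux.S a b n
      = ↑(((Finset.univ : Finset (Stmt16Aux.σt a b)).finsuppAntidiag (2 * n)).filter
          (fun μ => Stmt16Aux.degY μ ≤ n ∧ ∀ i : Fin a, μ (Sum.inl i) ≤ n)) := by
    ext μ
    simp only [Finset.coe_filter, Set.mem_setOf_eq, Finset.mem_finsuppAntidiag]
    constructor
    · intro h
      obtain ⟨h1, h2, h3⟩ := Stmt16Aux.S_facts h
      exact ⟨⟨h1, Finset.subset_univ _⟩, h2, h3⟩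
    · rintro ⟨⟨h1, -⟩, h2, h3⟩
      exact Stmt16Aux.mem_S_of_bounds h1 h2 h3
  rw [hset, Set.ncard_coe_finset, Stmt16Aux.Tfin_card a b n ha hb hn]
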